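/- Let S = [0,1]² be the unit square and let ℓ be a line intersecting the interior of S in two points that lie on two adjacent sides of S. Then the reflection across ℓ of the (triangular) component of S \ ℓ cut off by those two sides is contained in S; consequently the folded shape (the union of the uncut part of S and the reflected triangle) is contained in S. -/

import Mathlib

set_option maxHeartbeats 1000000 in
/-- Folding the unit square along a line crossing two adjacent sides: the reflection of
the triangular corner component across the fold line stays inside the square, and hence
so does the whole folded shape. The reflection is characterized as the isometry fixing
the two crossing points and moving the corner `(0,0)`. -/
theorem square_fold_adjacent_sides (t b : ℝ) (ht : 0 < t) (ht1 : t < 1)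
    (hb : 0 < b) (hb1 : b < 1) :
    let S : Set (EuclideanSpace ℝ (Fin 2)) :=
      {x | 0 ≤ x 0 ∧ x 0 ≤ 1 ∧ 0 ≤ x 1 ∧ x 1 ≤ 1}
    let Tpt : EuclideanSpace ℝ (Fin 2) := !₂[0, t]
    let Bpt : EuclideanSpace ℝ (Fin 2) := !₂[b, 0]
    let tri : Set (EuclideanSpace ℝ (Fin 2)) := convexHull ℝ {0, Tpt, Bpt}
    ∀ f : EuclideanSpace ℝ (Fin 2) ≃ᵃⁱ[ℝ] EuclideanSpace ℝ (Fin 2),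
      f Tpt = Tpt → f Bpt = Bpt → f 0 ≠ 0 →
      (f '' tri ⊆ S ∧ (S \ tri) ∪ f '' tri ⊆ S) := by
  intro S Tpt Bpt tri f hT hB h0
  have hSconv : Convex ℝ S := by
    intro p hp q hq a c ha hc hac
    obtain ⟨hp0, hp1, hp2, hp3⟩ := hp
    obtain ⟨hq0, hq1, hq2, hq3⟩ := hq
    refine ⟨?_, ?_, ?_, ?_⟩ <;>
      simp only [PiLp.add_apply, PiLp.smul_apply, smul_eq_mul] <;> nlinarith
  set u : EuclideanSpace ℝ (Fin 2) := f 0 with hu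
  have hdT : dist u Tpt = dist (0 : EuclideanSpace ℝ (Fin 2)) Tpt := by
    have h := f.dist_map 0 Tpt; rw [hT] at h; rw [hu]; exact h
  have hdB : dist u Bpt = dist (0 : EuclideanSpace ℝ (Fin 2)) Bpt := by
    have h := f.dist_map 0 Bpt; rw [hB] at h; rw [hu]; exact h
  set x := u 0 with hx
  set y := u 1 with hy
  have key : ∀ p : EuclideanSpace ℝ (Fin 2), dist u p = dist 0 p →
      (x - p 0)^2 + (y - p 1)^2 = (p 0)^2 + (p 1)^2 := by
    intro p hp
    rw [EuclideanSpace.dist_eq, EuclideanSpace.dist_eq] at hp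
    have h := (Real.sqrt_inj (Finset.sum_nonneg fun i _ => sq_nonneg _)
      (Finset.sum_nonneg fun i _ => sq_nonneg _)).mp hp
    rw [Fin.sum_univ_two, Fin.sum_univ_two] at h
    simpa [Real.dist_eq, sq_abs, sub_zero, zero_sub, neg_sq] using h
  have hT0 : Tpt 0 = 0 := rfl
  have hT1 : Tpt 1 = t := rfl
  have hB0 : Bpt 0 = b := rfl
  have hB1 : Bpt 1 = 0 := rfl
  have e1 : x ^ 2 + (y - t) ^ 2 = t ^ 2 := by
    have h := key Tpt hdT
    rw [hT0, hT1] at h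
    linarith [h]
  have e2 : (x - b) ^ 2 + y ^ 2 = b ^ 2 := by
    have h := key Bpt hdB
    rw [hB0, hB1] at h
    linarith [h]
  -- ty = bx
  have e3 : t * y = b * x := by nlinarith [e1, e2]
  have hxne : x ≠ 0 := by
    intro h
    have hy0 : y = 0 := by
      have : t * y = 0 := by rw [e3, h]; ring
      exact (mul_eq_zero.mp this).resolve_left (ne_of_gt ht)
    apply h0
    have : u = 0 := by
      ext i
      fin_cases i
      · exact h
      · exact hy0
    exact this
  have hxeq : x * (t ^ 2 + b ^ 2) = 2 * b * t ^ 2 := by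
    have h' : x * (x * (t ^ 2 + b ^ 2)) = x * (2 * b * t ^ 2) := by linear_combination t^2*e2 - (t*y + b*x)*e3
    exact mul_left_cancel₀ hxne h'
  have hyeq : y * (t ^ 2 + b ^ 2) = 2 * b ^ 2 * t := by
    have h' : t * (y * (t ^ 2 + b ^ 2)) = t * (2 * b ^ 2 * t) := by linear_combination (t^2+b^2)*e3 + b*hxeq
    exact mul_left_cancel₀ (ne_of_gt ht) h'
  have hpos : 0 < t ^ 2 + b ^ 2 := by positivity
  have huS : u ∈ S := by
    refine ⟨?_, ?_, ?_, ?_⟩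
    · nlinarith [hxeq, hpos]
    · nlinarith [hxeq, hpos, sq_nonneg (t - b)]
    · nlinarith [hyeq, hpos]
    · nlinarith [hyeq, hpos, sq_nonneg (t - b)]
  have hTS : Tpt ∈ S := ⟨le_refl 0, zero_le_one, le_of_lt ht, le_of_lt ht1⟩
  have hBS : Bpt ∈ S := ⟨le_of_lt hb, le_of_lt hb1, le_refl 0, zero_le_one⟩
  have himg : f '' tri = convexHull ℝ {u, Tpt, Bpt} := by
    have h1 : f '' tri = convexHull ℝ (f '' {0, Tpt, Bpt}) :=
      f.toAffineEquiv.toAffineMap.image_convexHull {0, Tpt, Bpt}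
    rw [h1]
    congr 1
    rw [Set.image_insert_eq, Set.image_insert_eq, Set.image_singleton, hT, hB]
  have hsub : f '' tri ⊆ S := by
    rw [himg]
    apply convexHull_min _ hSconv
    intro z hz
    rcases hz with h | h | h
    · rw [h]; exact huS
    · rw [h]; exact hTS
    · rw [Set.mem_singleton_iff.mp h]; exact hBS
  exact ⟨hsub, Set.union_subset (fun z hz => hz.1) hsub⟩
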